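/- arXiv:2511.07145 — 2 statements merged into one kernel-verified Lean document; each statement's English description precedes it below -/
import Mathlib

section
/- Let p̂ be the empirical distribution of n i.i.d. samples from a distribution p over a finite set of k elements. Then for every t > 0, Pr(‖p̂ − p‖₁ ≥ t) ≤ 2^k · exp(−n t² / 2). -/
open scoped BigOperators
open MeasureTheory ProbabilityTheory Classical

lemma bhc_d_pos {q : ℝ} (h0 : 0 ≤ q) (h1 : q ≤ 1) (s : ℝ) :
    0 < 1 - q + q * Real.exp s := by
  rcases h0.eq_or_lt with h | h
  · simp [← h]
  · nlinarith [Real.exp_pos s, mul_pos h (Real.exp_pos s)]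

lemma bhc_log_bound {q : ℝ} (h0 : 0 ≤ q) (h1 : q ≤ 1) (s : ℝ) :
    Real.log (1 - q + q * Real.exp s) - s * q ≤ s ^ 2 / 8 := by
  set d : ℝ → ℝ := fun s => 1 - q + q * Real.exp s with hd
  have hdpos : ∀ s, 0 < d s := fun s => bhc_d_pos h0 h1 s
  set f : ℝ → ℝ := fun s => Real.log (d s) - s * q - s ^ 2 / 8 with hf
  set f' : ℝ → ℝ := fun s => q * Real.exp s / d s - q - s / 4 with hf'
  have hdd : ∀ s, HasDerivAt d (q * Real.exp s) s := by
    intro s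
    exact ((Real.hasDerivAt_exp s).const_mul q).const_add (1 - q)
  have hderiv : ∀ s, HasDerivAt f (f' s) s := by
    intro s
    have h1' : HasDerivAt (fun s => Real.log (d s)) (q * Real.exp s / d s) s :=
      (hdd s).log (hdpos s).ne'
    have h2 : HasDerivAt (fun s : ℝ => s * q) q s := by
      simpa using (hasDerivAt_id s).mul_const q
    have h3 : HasDerivAt (fun s : ℝ => s ^ 2 / 8) (s / 4) s := by
      have := (hasDerivAt_pow 2 s).div_const 8
      refine this.congr_deriv ?_
      ring
    exact (h1'.sub h2).sub h3
  have hderiv2 : ∀ s, HasDerivAt f'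
      ((q * Real.exp s * d s - q * Real.exp s * (q * Real.exp s)) / d s ^ 2 - 1 / 4) s := by
    intro s
    have h1' : HasDerivAt (fun s => q * Real.exp s / d s)
        ((q * Real.exp s * d s - q * Real.exp s * (q * Real.exp s)) / d s ^ 2) s :=
      ((Real.hasDerivAt_exp s).const_mul q).div (hdd s) (hdpos s).ne'
    have h2 : HasDerivAt (fun s : ℝ => s / 4) (1 / 4) s := (hasDerivAt_id s).div_const 4
    exact (h1'.sub_const q).sub h2
  have hf'0 : f' 0 = 0 := by
    simp [hf', hd]
  have hderiv2_nonpos : ∀ s,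
      (q * Real.exp s * d s - q * Real.exp s * (q * Real.exp s)) / d s ^ 2 - 1 / 4 ≤ 0 := by
    intro s
    have hds := hdpos s
    rw [sub_nonpos, div_le_iff₀ (by positivity)]
    nlinarith [sq_nonneg (q * Real.exp s - d s / 2)]
  have hanti : Antitone f' := by
    have hdiff : Differentiable ℝ f' := fun s => (hderiv2 s).differentiableAt
    refine antitone_of_deriv_nonpos hdiff ?_
    intro s
    rw [(hderiv2 s).deriv]
    exact hderiv2_nonpos s
  have hf0 : f 0 = 0 := by simp [hf, hd]
  have key : ∀ s, f s ≤ 0 := by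
    intro s
    rcases le_total 0 s with hs | hs
    · have : AntitoneOn f (Set.Ici 0) := by
        refine antitoneOn_of_deriv_nonpos (convex_Ici 0)
          (Continuous.continuousOn (by
            exact continuous_iff_continuousAt.2 fun x => (hderiv x).continuousAt)) ?_ ?_
        · intro x hx
          exact (hderiv x).differentiableAt.differentiableWithinAt
        · intro x hx
          rw [(hderiv x).deriv]
          have : f' x ≤ f' 0 := hanti (le_of_lt (by simpa using hx))
          linarith [hf'0]
      have := this (Set.self_mem_Ici) (Set.mem_Ici.2 hs) hs
      linarith [hf0]
    · have : MonotoneOn f (Set.Iic 0) := by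
        refine monotoneOn_of_deriv_nonneg (convex_Iic 0)
          (Continuous.continuousOn (by
            exact continuous_iff_continuousAt.2 fun x => (hderiv x).continuousAt)) ?_ ?_
        · intro x hx
          exact (hderiv x).differentiableAt.differentiableWithinAt
        · intro x hx
          rw [(hderiv x).deriv]
          have : f' 0 ≤ f' x := hanti (le_of_lt (by simpa using hx))
          linarith [hf'0]
      have := this (Set.mem_Iic.2 hs) (Set.self_mem_Iic) hs
      linarith [hf0]
  have := key s
  simp only [hf] at this
  linarith

lemma bhc_mgf_bound {q : ℝ} (h0 : 0 ≤ q) (h1 : q ≤ 1) (s : ℝ) :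
    (1 - q + q * Real.exp s) * Real.exp (-(s * q)) ≤ Real.exp (s ^ 2 / 8) := by
  have hd := bhc_d_pos h0 h1 s
  have hl := bhc_log_bound h0 h1 s
  calc (1 - q + q * Real.exp s) * Real.exp (-(s * q))
      = Real.exp (Real.log (1 - q + q * Real.exp s) - s * q) := by
        rw [Real.exp_sub, Real.exp_log hd, Real.exp_neg]; ring
    _ ≤ Real.exp (s ^ 2 / 8) := Real.exp_le_exp.2 hl

lemma bhc_chernoff {Ω : Type*} [MeasurableSpace Ω] (μ : Measure Ω) [IsProbabilityMeasure μ]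
    {ι : Type*} [Fintype ι] [mι : MeasurableSpace ι] [MeasurableSingletonClass ι]
    (n : ℕ) (X : Fin n → Ω → ι) (hmeas : ∀ i, Measurable (X i))
    (hindep : iIndepFun (m := fun _ => mι) X μ) (A : Finset ι) (pA : ℝ)
    (hpA0 : 0 ≤ pA) (hpA1 : pA ≤ 1)
    (hμA : ∀ i, (μ {ω | X i ω ∈ A}).toReal = pA)
    (t : ℝ) (ht : 0 < t) :
    (μ {ω | (n : ℝ) * t / 2 ≤ ∑ i, ((if X i ω ∈ A then (1:ℝ) else 0) - pA)}).toReal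
      ≤ Real.exp (-(n : ℝ) * t ^ 2 / 2) := by
  set Z : Fin n → Ω → ℝ := fun i ω => (if X i ω ∈ A then (1:ℝ) else 0) - pA with hZ
  have hZmeas : ∀ i, Measurable (Z i) := by
    intro i
    exact ((measurable_of_countable (fun x : ι => (if x ∈ A then (1:ℝ) else 0) - pA)).comp
      (hmeas i))
  have hZindep : iIndepFun (m := fun _ => inferInstance) Z μ :=
    hindep.comp (fun i => fun x : ι => (if x ∈ A then (1:ℝ) else 0) - pA)
      (fun i => measurable_of_countable _)
  have hexp_eq : ∀ (s : ℝ) (i : Fin n), (fun ω => Real.exp (s * Z i ω)) =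
      fun ω => Set.indicator {ω | X i ω ∈ A}
        (fun _ => Real.exp (s * (1 - pA)) - Real.exp (-(s * pA))) ω + Real.exp (-(s * pA)) := by
    intro s i
    funext ω
    by_cases h : X i ω ∈ A <;>
      simp [hZ, h, Set.indicator_of_mem, Set.indicator_of_notMem, Set.mem_setOf_eq]
  have hEmeas : ∀ i : Fin n, MeasurableSet {ω | X i ω ∈ A} := by
    intro i
    exact (hmeas i) (Set.Finite.measurableSet (A : Set ι).toFinite)
  have hint : ∀ (s : ℝ) (i : Fin n), Integrable (fun ω => Real.exp (s * Z i ω)) μ := by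
    intro s i
    rw [hexp_eq s i]
    exact ((integrable_const _).indicator (hEmeas i)).add (integrable_const _)
  have hmgf : ∀ (s : ℝ) (i : Fin n),
      mgf (Z i) μ s = (1 - pA + pA * Real.exp s) * Real.exp (-(s * pA)) := by
    intro s i
    rw [mgf, hexp_eq s i, integral_add ((integrable_const _).indicator (hEmeas i))
      (integrable_const _), integral_indicator_const _ (hEmeas i), integral_const]
    simp only [measureReal_def, measure_univ, ENNReal.toReal_one, one_smul, smul_eq_mul, hμA i]
    have : Real.exp (s * (1 - pA)) = Real.exp s * Real.exp (-(s * pA)) := by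
      rw [← Real.exp_add]; ring_nf
    rw [this]; ring
  have hsum_int : Integrable (fun ω => Real.exp (2 * t * (∑ i, Z i) ω)) μ :=
    hZindep.integrable_exp_mul_sum hZmeas (fun i _ => hint (2 * t) i)
  have hcher := measure_ge_le_exp_mul_mgf (X := ∑ i, Z i) (μ := μ) ((n : ℝ) * t / 2)
    (by positivity : (0:ℝ) ≤ 2 * t) hsum_int
  have hmgfsum : mgf (∑ i, Z i) μ (2 * t) = ∏ i : Fin n, mgf (Z i) μ (2 * t) :=
    hZindep.mgf_sum hZmeas Finset.univ
  have hprod : ∏ i : Fin n, mgf (Z i) μ (2 * t) ≤ Real.exp ((2 * t) ^ 2 / 8) ^ n := by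
    calc ∏ i : Fin n, mgf (Z i) μ (2 * t)
        ≤ ∏ _i : Fin n, Real.exp ((2 * t) ^ 2 / 8) := by
          refine Finset.prod_le_prod (fun i _ => mgf_nonneg) (fun i _ => ?_)
          rw [hmgf (2 * t) i]
          exact bhc_mgf_bound hpA0 hpA1 (2 * t)
      _ = Real.exp ((2 * t) ^ 2 / 8) ^ n := by
          rw [Finset.prod_const, Finset.card_univ, Fintype.card_fin]
  have hset : {ω | (n : ℝ) * t / 2 ≤ ∑ i, ((if X i ω ∈ A then (1:ℝ) else 0) - pA)} =
      {ω | (n : ℝ) * t / 2 ≤ (∑ i, Z i) ω} := by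
    ext ω; simp [hZ, Finset.sum_apply]
  rw [hset]
  refine hcher.trans ?_
  rw [hmgfsum]
  calc Real.exp (-(2 * t) * ((n : ℝ) * t / 2)) * ∏ i : Fin n, mgf (Z i) μ (2 * t)
      ≤ Real.exp (-(2 * t) * ((n : ℝ) * t / 2)) * Real.exp ((2 * t) ^ 2 / 8) ^ n := by
        exact mul_le_mul_of_nonneg_left hprod (Real.exp_nonneg _)
    _ = Real.exp (-(n : ℝ) * t ^ 2 / 2) := by
        rw [← Real.exp_nat_mul, ← Real.exp_add]
        congr 1
        ring

/-- Bretagnolle–Huber–Carol inequality: if p̂ is the empirical distribution of n i.i.d.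
    samples from a distribution p over a finite set of k elements, then for every t > 0,
    Pr(‖p̂ − p‖₁ ≥ t) ≤ 2^k · exp(−n t²/2). -/
theorem bretagnolle_huber_carol
    {Ω : Type*} [MeasurableSpace Ω] (μ : Measure Ω) [IsProbabilityMeasure μ]
    {ι : Type*} [Fintype ι] [mι : MeasurableSpace ι] [MeasurableSingletonClass ι]
    (n : ℕ) (hn : 0 < n)
    (X : Fin n → Ω → ι) (hmeas : ∀ i, Measurable (X i))
    (hindep : iIndepFun (m := fun _ => mι) X μ)
    (p : ι → ℝ)
    (hid : ∀ i x, (μ {ω | X i ω = x}).toReal = p x)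
    (t : ℝ) (ht : 0 < t) :
    (μ {ω | t ≤ ∑ x, |((Finset.univ.filter fun i => X i ω = x).card : ℝ) / n - p x|}).toReal
      ≤ 2 ^ (Fintype.card ι) * Real.exp (-(n : ℝ) * t ^ 2 / 2) := by
  have i0 : Fin n := ⟨0, hn⟩
  have hp0 : ∀ x, 0 ≤ p x := by
    intro x
    rw [← hid i0 x]
    exact ENNReal.toReal_nonneg
  -- measure of the event {X i ∈ A}
  have hμA : ∀ (A : Finset ι) (i : Fin n),
      (μ {ω | X i ω ∈ A}).toReal = ∑ x ∈ A, p x := by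
    intro A i
    have hset : {ω | X i ω ∈ A} = ⋃ x ∈ A, {ω | X i ω = x} := by
      ext ω; simp
    rw [hset, measure_biUnion_finset]
    · rw [ENNReal.toReal_sum (fun x _ => measure_ne_top μ _)]
      exact Finset.sum_congr rfl (fun x _ => hid i x)
    · intro x _ y _ hxy
      rw [Function.onFun, Set.disjoint_left]
      intro ω h1 h2
      exact hxy (h1.symm.trans h2)
    · intro x _
      exact (hmeas i) (measurableSet_singleton x)
  have hpsum : ∑ x, p x = 1 := by
    have := hμA Finset.univ i0
    simpa using this.symm
  have hpA0 : ∀ A : Finset ι, 0 ≤ ∑ x ∈ A, p x :=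
    fun A => Finset.sum_nonneg (fun x _ => hp0 x)
  have hpA1 : ∀ A : Finset ι, ∑ x ∈ A, p x ≤ 1 := by
    intro A
    rw [← hpsum]
    exact Finset.sum_le_sum_of_subset_of_nonneg (Finset.subset_univ A)
      (fun x _ _ => hp0 x)
  set E : Finset ι → Set Ω := fun A =>
    {ω | (n : ℝ) * t / 2 ≤ ∑ i, ((if X i ω ∈ A then (1:ℝ) else 0) - ∑ x ∈ A, p x)} with hE
  -- inclusion into the union
  have hsub : {ω | t ≤ ∑ x, |((Finset.univ.filter fun i => X i ω = x).card : ℝ) / n - p x|}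
      ⊆ ⋃ A ∈ (Finset.univ : Finset ι).powerset, E A := by
    intro ω hω
    simp only [Set.mem_setOf_eq] at hω
    set c : ι → ℝ := fun x => ((Finset.univ.filter fun i => X i ω = x).card : ℝ) with hc
    set dd : ι → ℝ := fun x => c x / n - p x with hdd
    set A : Finset ι := Finset.univ.filter (fun x => p x ≤ c x / n) with hA
    have hn' : (0:ℝ) < n := by exact_mod_cast hn
    -- total count is n
    have hctot : ∑ x, c x = n := by
      have := Finset.card_eq_sum_card_fiberwise
        (f := fun i : Fin n => X i ω) (s := Finset.univ) (t := Finset.univ)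
        (fun i _ => Finset.mem_univ _)
      simp only [Finset.card_univ, Fintype.card_fin] at this
      simp only [hc]
      exact_mod_cast this.symm
    have hsum0 : ∑ x, dd x = 0 := by
      simp only [hdd, Finset.sum_sub_distrib]
      rw [← Finset.sum_div, hctot, hpsum]
      field_simp
      norm_num
    -- the absolute sum is twice the sum over A
    have habs : ∑ x, |dd x| = 2 * ∑ x ∈ A, dd x := by
      have hsplit := Finset.sum_filter_add_sum_filter_not Finset.univ
        (fun x => p x ≤ c x / n) (fun x => |dd x|)
      have hsplit2 := Finset.sum_filter_add_sum_filter_not Finset.univ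
        (fun x => p x ≤ c x / n) dd
      have h1 : ∑ x ∈ A, |dd x| = ∑ x ∈ A, dd x := by
        refine Finset.sum_congr rfl (fun x hx => ?_)
        rw [hA, Finset.mem_filter] at hx
        exact abs_of_nonneg (by simp only [hdd]; linarith [hx.2])
      have h2 : ∑ x ∈ Finset.univ.filter (fun x => ¬ p x ≤ c x / n), |dd x|
          = - ∑ x ∈ Finset.univ.filter (fun x => ¬ p x ≤ c x / n), dd x := by
        rw [← Finset.sum_neg_distrib]
        refine Finset.sum_congr rfl (fun x hx => ?_)
        rw [Finset.mem_filter] at hx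
        exact abs_of_neg (by simp only [hdd]; push_neg at hx; linarith [hx.2])
      rw [← hsplit, h1, h2]
      rw [hsum0] at hsplit2
      rw [hA]
      linarith [hsplit2]
    have htA : t / 2 ≤ ∑ x ∈ A, dd x := by
      rw [habs] at hω
      linarith
    -- the count over A
    have hcardA : ((Finset.univ.filter fun i : Fin n => X i ω ∈ A).card : ℝ)
        = ∑ x ∈ A, c x := by
      have := Finset.card_eq_sum_card_fiberwise
        (f := fun i : Fin n => X i ω) (s := Finset.univ.filter fun i : Fin n => X i ω ∈ A)
        (t := A) (fun i hi => (Finset.mem_filter.1 hi).2)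
      have heq : ∀ x ∈ A, ((Finset.univ.filter fun i : Fin n => X i ω ∈ A).filter
          (fun i => X i ω = x)) = Finset.univ.filter fun i : Fin n => X i ω = x := by
        intro x hx
        ext i
        simp only [Finset.mem_filter, Finset.mem_univ, true_and]
        constructor
        · rintro ⟨_, h⟩; exact h
        · intro h; exact ⟨h ▸ hx, h⟩
      have this2 : (Finset.univ.filter fun i : Fin n => X i ω ∈ A).card
          = ∑ x ∈ A, (Finset.univ.filter fun i : Fin n => X i ω = x).card := by
        rw [this]
        exact Finset.sum_congr rfl (fun x hx => by rw [heq x hx])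
      simp only [hc]
      exact_mod_cast this2
    refine Set.mem_biUnion (Finset.mem_powerset.2 (Finset.subset_univ A)) ?_
    simp only [hE, Set.mem_setOf_eq]
    have hsumZ : ∑ i, ((if X i ω ∈ A then (1:ℝ) else 0) - ∑ x ∈ A, p x)
        = ((Finset.univ.filter fun i : Fin n => X i ω ∈ A).card : ℝ)
          - n * ∑ x ∈ A, p x := by
      rw [Finset.sum_sub_distrib, Finset.sum_const, Finset.card_univ, Fintype.card_fin]
      congr 1
      · rw [Finset.sum_boole]
      · rw [nsmul_eq_mul]
    rw [hsumZ, hcardA]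
    have hAd : ∑ x ∈ A, dd x = (∑ x ∈ A, c x) / n - ∑ x ∈ A, p x := by
      simp only [hdd, Finset.sum_sub_distrib, Finset.sum_div]
    have hkey : (∑ x ∈ A, c x) - n * ∑ x ∈ A, p x = n * ∑ x ∈ A, dd x := by
      rw [hAd]
      field_simp
    rw [hkey]
    calc (n : ℝ) * t / 2 = n * (t / 2) := by ring
      _ ≤ n * ∑ x ∈ A, dd x := mul_le_mul_of_nonneg_left htA hn'.le
  -- union bound
  have h1 : μ {ω | t ≤ ∑ x, |((Finset.univ.filter fun i => X i ω = x).card : ℝ) / n - p x|}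
      ≤ ∑ A ∈ (Finset.univ : Finset ι).powerset, μ (E A) :=
    (measure_mono hsub).trans (measure_biUnion_finset_le _ _)
  have h2 : (μ {ω | t ≤ ∑ x,
      |((Finset.univ.filter fun i => X i ω = x).card : ℝ) / n - p x|}).toReal
      ≤ ∑ A ∈ (Finset.univ : Finset ι).powerset, (μ (E A)).toReal := by
    rw [← ENNReal.toReal_sum (fun A _ => measure_ne_top μ _)]
    exact ENNReal.toReal_mono (ENNReal.sum_lt_top.2 (fun A _ => measure_lt_top μ _)).ne h1
  refine h2.trans ?_
  have h3 : ∀ A ∈ (Finset.univ : Finset ι).powerset,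
      (μ (E A)).toReal ≤ Real.exp (-(n : ℝ) * t ^ 2 / 2) := by
    intro A _
    exact bhc_chernoff μ n X hmeas hindep A (∑ x ∈ A, p x) (hpA0 A) (hpA1 A)
      (fun i => hμA A i) t ht
  calc ∑ A ∈ (Finset.univ : Finset ι).powerset, (μ (E A)).toReal
      ≤ ∑ _A ∈ (Finset.univ : Finset ι).powerset, Real.exp (-(n : ℝ) * t ^ 2 / 2) :=
        Finset.sum_le_sum h3
    _ = 2 ^ (Fintype.card ι) * Real.exp (-(n : ℝ) * t ^ 2 / 2) := by
        rw [Finset.sum_const, Finset.card_powerset, Finset.card_univ, nsmul_eq_mul]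
        push_cast
        ring
end

section
/- For probability vectors P, Q on a finite set, √JS defines a metric: it is symmetric, vanishes iff P = Q, and satisfies the triangle inequality √JS(P,R) ≤ √JS(P,Q) + √JS(Q,R). -/
open scoped BigOperators

def IsProbVec {ι : Type*} [Fintype ι] (P : ι → ℝ) : Prop :=
  (∀ x, 0 ≤ P x) ∧ ∑ x, P x = 1

noncomputable def klDiv {ι : Type*} [Fintype ι] (P Q : ι → ℝ) : ℝ :=
  ∑ x, P x * Real.log (P x / Q x)

noncomputable def jsDiv {ι : Type*} [Fintype ι] (P Q : ι → ℝ) : ℝ :=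
  (1/2) * klDiv P (fun x => (P x + Q x) / 2) + (1/2) * klDiv Q (fun x => (P x + Q x) / 2)

open MeasureTheory Real Set Filter Topology

noncomputable def Lfun (a b : ℝ) : ℝ :=
  a * Real.log a + b * Real.log b - (a + b) * Real.log ((a + b) / 2)

noncomputable def gfun (a b : ℝ) (t : ℝ) : ℝ :=
  (a + b) / ((a + b) / 2 + t) - a / (a + t) - b / (b + t)

lemma gfun_nonneg {a b : ℝ} (ha : 0 ≤ a) (hb : 0 ≤ b) {t : ℝ} (ht : 0 < t) :
    0 ≤ gfun a b t := by
  have h1 : 0 < a + t := by linarith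
  have h2 : 0 < b + t := by linarith
  have h3 : 0 < (a + b) / 2 + t := by linarith
  unfold gfun
  rw [sub_sub, sub_nonneg, div_add_div _ _ h1.ne' h2.ne', div_le_div_iff₀ (by positivity) h3]
  nlinarith [mul_nonneg ht.le (sq_nonneg (a - b))]

lemma Ffun_hasDeriv {a b : ℝ} (ha : 0 ≤ a) (hb : 0 ≤ b) {t : ℝ} (ht : 0 < t) :
    HasDerivAt (fun t : ℝ => (a + b) * Real.log ((a + b) / 2 + t)
      - a * Real.log (a + t) - b * Real.log (b + t)) (gfun a b t) t := by
  have h1 : 0 < a + t := by linarith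
  have h2 : 0 < b + t := by linarith
  have h3 : 0 < (a + b) / 2 + t := by linarith
  have d1 : HasDerivAt (fun t : ℝ => (a + b) / 2 + t) 1 t := (hasDerivAt_id t).const_add _
  have d2 : HasDerivAt (fun t : ℝ => a + t) 1 t := (hasDerivAt_id t).const_add _
  have d3 : HasDerivAt (fun t : ℝ => b + t) 1 t := (hasDerivAt_id t).const_add _
  have l1 := (d1.log h3.ne').const_mul (a + b)
  have l2 := (d2.log h1.ne').const_mul a
  have l3 := (d3.log h2.ne').const_mul b
  have := (l1.sub l2).sub l3
  refine this.congr_deriv ?_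
  unfold gfun
  field_simp

lemma cwa_term {c d : ℝ} (hd : 0 ≤ d) (h : d = 0 → c = 0) :
    ContinuousWithinAt (fun t : ℝ => c * Real.log (d + t)) (Set.Ici 0) 0 := by
  rcases eq_or_lt_of_le hd with h0 | h0
  · have hc : c = 0 := h h0.symm
    simp only [hc, zero_mul]
    exact continuousWithinAt_const
  · have : ContinuousAt (fun t : ℝ => c * Real.log (d + t)) 0 := by
      have hlog : ContinuousAt Real.log (d + 0) := Real.continuousAt_log (by simp [h0.ne'])
      exact continuousAt_const.mul (hlog.comp ((continuous_const.add continuous_id).continuousAt))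
    exact this.continuousWithinAt

lemma Ffun_tendsto {a b : ℝ} (ha : 0 ≤ a) (hb : 0 ≤ b) :
    Tendsto (fun t : ℝ => (a + b) * Real.log ((a + b) / 2 + t)
      - a * Real.log (a + t) - b * Real.log (b + t)) atTop (𝓝 0) := by
  set m := (a + b) / 2 with hm
  have hrat : ∀ c : ℝ, 0 ≤ c → Tendsto (fun t : ℝ => (m + t) / (c + t)) atTop (𝓝 1) := by
    intro c hc
    have h0 : Tendsto (fun t : ℝ => (m - c) / (c + t)) atTop (𝓝 0) := by
      apply Tendsto.div_atTop tendsto_const_nhds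
      exact tendsto_atTop_add_const_left _ c tendsto_id
    have h1 : Tendsto (fun t : ℝ => 1 + (m - c) / (c + t)) atTop (𝓝 (1 + 0)) :=
      (tendsto_const_nhds : Tendsto (fun _ : ℝ => (1:ℝ)) atTop (𝓝 1)).add h0
    rw [add_zero] at h1
    apply h1.congr'
    filter_upwards [eventually_gt_atTop 0] with t ht
    have : c + t ≠ 0 := by positivity
    field_simp
    ring
  have hlog : ∀ c : ℝ, 0 ≤ c →
      Tendsto (fun t : ℝ => c * Real.log ((m + t) / (c + t))) atTop (𝓝 0) := by
    intro c hc
    have h1 : Tendsto (fun t : ℝ => Real.log ((m + t) / (c + t))) atTop (𝓝 0) := by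
      have := (Real.continuousAt_log one_ne_zero).tendsto.comp (hrat c hc)
      simpa [Function.comp_def] using this
    simpa using h1.const_mul c
  have hM : 0 ≤ m := by positivity
  have := (hlog a ha).add (hlog b hb)
  rw [add_zero] at this
  apply this.congr'
  filter_upwards [eventually_gt_atTop 0] with t ht
  have h1 : 0 < a + t := by linarith
  have h2 : 0 < b + t := by linarith
  have h3 : 0 < m + t := by linarith
  rw [Real.log_div h3.ne' h1.ne', Real.log_div h3.ne' h2.ne']
  ring

lemma gfun_integral {a b : ℝ} (ha : 0 ≤ a) (hb : 0 ≤ b) :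
    IntegrableOn (gfun a b) (Set.Ioi 0) volume ∧
      ∫ t in Set.Ioi (0:ℝ), gfun a b t = Lfun a b := by
  set F : ℝ → ℝ := fun t => (a + b) * Real.log ((a + b) / 2 + t)
      - a * Real.log (a + t) - b * Real.log (b + t) with hF
  have hcont : ContinuousWithinAt F (Set.Ici 0) 0 := by
    apply ContinuousWithinAt.sub
    apply ContinuousWithinAt.sub
    · exact cwa_term (by positivity) (by intro h; linarith [abs_nonneg a])
    · exact cwa_term ha (fun h => h)
    · exact cwa_term hb (fun h => h)
  have hderiv : ∀ t ∈ Set.Ioi (0:ℝ), HasDerivAt F (gfun a b t) t :=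
    fun t ht => Ffun_hasDeriv ha hb ht
  have hpos : ∀ t ∈ Set.Ioi (0:ℝ), 0 ≤ gfun a b t := fun t ht => gfun_nonneg ha hb ht
  have htend : Tendsto F atTop (𝓝 0) := Ffun_tendsto ha hb
  refine ⟨integrableOn_Ioi_deriv_of_nonneg hcont hderiv hpos htend, ?_⟩
  rw [integral_Ioi_of_hasDerivAt_of_nonneg hcont hderiv hpos htend]
  have : F 0 = - Lfun a b := by
    simp only [hF, add_zero, Lfun]
    ring
  rw [this]
  ring

lemma Lfun_nonneg {a b : ℝ} (ha : 0 ≤ a) (hb : 0 ≤ b) : 0 ≤ Lfun a b := by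
  rw [← (gfun_integral ha hb).2]
  exact setIntegral_nonneg measurableSet_Ioi (fun t ht => gfun_nonneg ha hb ht)

lemma Lfun_self (a : ℝ) : Lfun a a = 0 := by
  have : (a + a) / 2 = a := by ring
  rw [Lfun, this]
  ring

lemma Lfun_comm (a b : ℝ) : Lfun a b = Lfun b a := by
  rw [Lfun, Lfun, add_comm b a]
  ring

lemma Lfun_pos {a b : ℝ} (ha : 0 ≤ a) (hb : 0 ≤ b) (hne : a ≠ b) : 0 < Lfun a b := by
  have main : ∀ a b : ℝ, 0 < a → 0 < b → a ≠ b → 0 < Lfun a b := by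
    intro a b ha hb hne
    have hm : 0 < (a + b) / 2 := by linarith
    have hma : (a + b) / 2 / a ≠ 1 := by
      intro h
      apply hne
      have := (div_eq_one_iff_eq ha.ne').mp h
      linarith
    have l1 : Real.log ((a + b) / 2 / a) < (a + b) / 2 / a - 1 :=
      Real.log_lt_sub_one_of_pos (by positivity) hma
    have l2 : Real.log ((a + b) / 2 / b) ≤ (a + b) / 2 / b - 1 :=
      Real.log_le_sub_one_of_pos (by positivity)
    rw [Real.log_div hm.ne' ha.ne'] at l1
    rw [Real.log_div hm.ne' hb.ne'] at l2
    have i1 : a * (Real.log ((a + b) / 2) - Real.log a) < (a + b) / 2 - a := by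
      have := mul_lt_mul_of_pos_left l1 ha
      have e : a * ((a + b) / 2 / a - 1) = (a + b) / 2 - a := by field_simp
      linarith [e ▸ this]
    have i2 : b * (Real.log ((a + b) / 2) - Real.log b) ≤ (a + b) / 2 - b := by
      have := mul_le_mul_of_nonneg_left l2 hb.le
      have e : b * ((a + b) / 2 / b - 1) = (a + b) / 2 - b := by field_simp
      linarith [e ▸ this]
    rw [Lfun]
    nlinarith [i1, i2]
  rcases eq_or_lt_of_le ha with h0 | h0
  · -- a = 0, b > 0
    have hb' : 0 < b := lt_of_le_of_ne hb (fun h => hne (h0.symm.trans h))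
    rw [← h0, Lfun]
    simp only [zero_add, Real.log_zero, mul_zero, zero_mul]
    rw [Real.log_div hb'.ne' two_ne_zero]
    have : 0 < Real.log 2 := Real.log_pos (by norm_num)
    nlinarith
  rcases eq_or_lt_of_le hb with h1 | h1
  · rw [Lfun_comm, ← h1, Lfun]
    simp only [zero_add, Real.log_zero, mul_zero, zero_mul]
    rw [Real.log_div h0.ne' two_ne_zero]
    have : 0 < Real.log 2 := Real.log_pos (by norm_num)
    nlinarith
  · exact main a b h0 h1 hne

lemma masterCS {A B C : ℝ} (hA : 0 < A) (hB : 0 < B) (hC : 0 < C) :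
    ((A-B)^2/(A*B*(A+B)) + (B-C)^2/(B*C*(B+C)) - (A-C)^2/(A*C*(A+C)))^2
      ≤ 4 * ((A-B)^2/(A*B*(A+B))) * ((B-C)^2/(B*C*(B+C))) := by
  have hAB : (0:ℝ) < A + B := by linarith
  have hBC : (0:ℝ) < B + C := by linarith
  have hAC : (0:ℝ) < A + C := by linarith
  have key : 4 * ((A-B)^2/(A*B*(A+B))) * ((B-C)^2/(B*C*(B+C)))
      - ((A-B)^2/(A*B*(A+B)) + (B-C)^2/(B*C*(B+C)) - (A-C)^2/(A*C*(A+C)))^2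
      = 4*B*(A+B+C)*((A-B)*(B-C)*(A-C))^2 / (A*C*B^2*((A+B)*(B+C)*(A+C))^2) := by
    field_simp
    ring
  have pos : 0 ≤ 4*B*(A+B+C)*((A-B)*(B-C)*(A-C))^2 / (A*C*B^2*((A+B)*(B+C)*(A+C))^2) := by
    positivity
  linarith

lemma pointwiseCS {a b c t : ℝ} (ha : 0 ≤ a) (hb : 0 ≤ b) (hc : 0 ≤ c) (ht : 0 < t) :
    gfun a c t ≤ gfun a b t + gfun b c t + 2 * Real.sqrt (gfun a b t * gfun b c t) := by
  have hA : 0 < a + t := by linarith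
  have hB : 0 < b + t := by linarith
  have hC : 0 < c + t := by linarith
  have eab : gfun a b t = t * (((a+t)-(b+t))^2/((a+t)*(b+t)*((a+t)+(b+t)))) := by
    unfold gfun
    have h3 : (0:ℝ) < (a + b) / 2 + t := by linarith
    field_simp
    ring
  have ebc : gfun b c t = t * (((b+t)-(c+t))^2/((b+t)*(c+t)*((b+t)+(c+t)))) := by
    unfold gfun
    have h3 : (0:ℝ) < (b + c) / 2 + t := by linarith
    field_simp
    ring
  have eac : gfun a c t = t * (((a+t)-(c+t))^2/((a+t)*(c+t)*((a+t)+(c+t)))) := by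
    unfold gfun
    have h3 : (0:ℝ) < (a + c) / 2 + t := by linarith
    field_simp
    ring
  set x := ((a+t)-(b+t))^2/((a+t)*(b+t)*((a+t)+(b+t))) with hx
  set y := ((b+t)-(c+t))^2/((b+t)*(c+t)*((b+t)+(c+t))) with hy
  set z := ((a+t)-(c+t))^2/((a+t)*(c+t)*((a+t)+(c+t))) with hz
  have hx0 : 0 ≤ x := by positivity
  have hy0 : 0 ≤ y := by positivity
  have hM : (x + y - z)^2 ≤ 4 * x * y := masterCS hA hB hC
  have hsq : Real.sqrt (x*y) ^ 2 = x * y := Real.sq_sqrt (mul_nonneg hx0 hy0)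
  have hs0 : 0 ≤ Real.sqrt (x*y) := Real.sqrt_nonneg _
  have hzxy : z ≤ x + y + 2 * Real.sqrt (x*y) := by nlinarith [hM, hsq, hs0]
  rw [eab, ebc, eac]
  have hsqrt : Real.sqrt (t * x * (t * y)) = t * Real.sqrt (x * y) := by
    rw [show t * x * (t * y) = t^2 * (x*y) by ring, Real.sqrt_mul (sq_nonneg t),
      Real.sqrt_sq ht.le]
  rw [hsqrt]
  nlinarith [mul_le_mul_of_nonneg_left hzxy ht.le]

lemma two_sqrt_le {u v : ℝ} (hu : 0 ≤ u) (hv : 0 ≤ v) : 2 * Real.sqrt (u * v) ≤ u + v := by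
  nlinarith [sq_nonneg (Real.sqrt u - Real.sqrt v), Real.sq_sqrt hu, Real.sq_sqrt hv,
    Real.sqrt_mul hu v, Real.sqrt_nonneg u, Real.sqrt_nonneg v]

lemma Lfun_triangle_sq {a b c : ℝ} (ha : 0 ≤ a) (hb : 0 ≤ b) (hc : 0 ≤ c) :
    Lfun a c ≤ (Real.sqrt (Lfun a b) + Real.sqrt (Lfun b c))^2 := by
  rcases eq_or_ne a b with rfl | hab
  · rw [Lfun_self, Real.sqrt_zero, zero_add, Real.sq_sqrt (Lfun_nonneg ha hc)]
  rcases eq_or_ne b c with rfl | hbc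
  · rw [Lfun_self, Real.sqrt_zero, add_zero, Real.sq_sqrt (Lfun_nonneg ha hb)]
  have hF : 0 < Lfun a b := Lfun_pos ha hb hab
  have hG : 0 < Lfun b c := Lfun_pos hb hc hbc
  set sf := Real.sqrt (Lfun a b) with hsf
  set sg := Real.sqrt (Lfun b c) with hsg
  have hsf0 : 0 < sf := Real.sqrt_pos.mpr hF
  have hsg0 : 0 < sg := Real.sqrt_pos.mpr hG
  have hF2 : sf ^ 2 = Lfun a b := Real.sq_sqrt hF.le
  have hG2 : sg ^ 2 = Lfun b c := Real.sq_sqrt hG.le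
  -- pointwise bound
  have hpt : ∀ t ∈ Set.Ioi (0:ℝ),
      gfun a c t ≤ (1 + sg/sf) * gfun a b t + (1 + sf/sg) * gfun b c t := by
    intro t ht
    have ht' : (0:ℝ) < t := ht
    have h1 := pointwiseCS ha hb hc ht'
    have hu : 0 ≤ (sg/sf) * gfun a b t := by
      have := gfun_nonneg ha hb ht'; positivity
    have hv : 0 ≤ (sf/sg) * gfun b c t := by
      have := gfun_nonneg hb hc ht'; positivity
    have h2 := two_sqrt_le hu hv
    have he : (sg/sf) * gfun a b t * ((sf/sg) * gfun b c t)
        = gfun a b t * gfun b c t := by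
      field_simp
    rw [he] at h2
    linarith
  have iab := gfun_integral ha hb
  have ibc := gfun_integral hb hc
  have iac := gfun_integral ha hc
  have hint : ∫ t in Set.Ioi (0:ℝ), ((1 + sg/sf) * gfun a b t + (1 + sf/sg) * gfun b c t)
      = (1 + sg/sf) * Lfun a b + (1 + sf/sg) * Lfun b c := by
    rw [integral_add (iab.1.const_mul _) (ibc.1.const_mul _),
      MeasureTheory.integral_const_mul, MeasureTheory.integral_const_mul, iab.2, ibc.2]
  have hmono : Lfun a c ≤ (1 + sg/sf) * Lfun a b + (1 + sf/sg) * Lfun b c := by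
    rw [← iac.2, ← hint]
    exact setIntegral_mono_on iac.1
      ((iab.1.const_mul _).add (ibc.1.const_mul _)) measurableSet_Ioi hpt
  have halg : (1 + sg/sf) * Lfun a b + (1 + sf/sg) * Lfun b c = (sf + sg)^2 := by
    rw [← hF2, ← hG2]
    field_simp
    ring
  linarith [halg ▸ hmono]

lemma sqrt_Lfun_triangle {a b c : ℝ} (ha : 0 ≤ a) (hb : 0 ≤ b) (hc : 0 ≤ c) :
    Real.sqrt (Lfun a c) ≤ Real.sqrt (Lfun a b) + Real.sqrt (Lfun b c) := by
  have h := Lfun_triangle_sq ha hb hc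
  calc Real.sqrt (Lfun a c) ≤ Real.sqrt ((Real.sqrt (Lfun a b) + Real.sqrt (Lfun b c))^2) :=
        Real.sqrt_le_sqrt h
    _ = _ := Real.sqrt_sq (by positivity)

lemma jsDiv_eq_sum {ι : Type*} [Fintype ι] (P Q : ι → ℝ)
    (hP : ∀ x, 0 ≤ P x) (hQ : ∀ x, 0 ≤ Q x) :
    jsDiv P Q = (1/2) * ∑ x, Lfun (P x) (Q x) := by
  have hterm : ∀ p q : ℝ, 0 ≤ p → 0 ≤ q →
      p * Real.log (p / ((p + q) / 2)) = p * Real.log p - p * Real.log ((p + q) / 2) := by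
    intro p q hp hq
    rcases eq_or_lt_of_le hp with h | h
    · simp [← h]
    · have hm : 0 < (p + q) / 2 := by linarith
      rw [Real.log_div h.ne' hm.ne', mul_sub]
  unfold jsDiv klDiv
  rw [← mul_add, ← Finset.sum_add_distrib]
  congr 1
  apply Finset.sum_congr rfl
  intro x _
  have h1 := hterm (P x) (Q x) (hP x) (hQ x)
  have h2 := hterm (Q x) (P x) (hQ x) (hP x)
  rw [add_comm (Q x) (P x)] at h2
  rw [h1, h2, Lfun]
  ring


/-- Endres–Schindelin: √JS is a metric on the probability vectors over a finite set:
    it is symmetric, vanishes iff the distributions coincide, and satisfies the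
    triangle inequality. -/
theorem sqrt_js_is_metric {ι : Type*} [Fintype ι] :
    (∀ P Q : ι → ℝ, IsProbVec P → IsProbVec Q →
      Real.sqrt (jsDiv P Q) = Real.sqrt (jsDiv Q P)) ∧
    (∀ P Q : ι → ℝ, IsProbVec P → IsProbVec Q →
      (Real.sqrt (jsDiv P Q) = 0 ↔ P = Q)) ∧
    (∀ P Q R : ι → ℝ, IsProbVec P → IsProbVec Q → IsProbVec R →
      Real.sqrt (jsDiv P R) ≤ Real.sqrt (jsDiv P Q) + Real.sqrt (jsDiv Q R)) := by
  refine ⟨?_, ?_, ?_⟩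
  · -- symmetry
    intro P Q hP hQ
    rw [jsDiv_eq_sum P Q hP.1 hQ.1, jsDiv_eq_sum Q P hQ.1 hP.1]
    congr 1
    congr 1
    apply Finset.sum_congr rfl
    intro x _
    exact Lfun_comm (P x) (Q x)
  · -- vanishing
    intro P Q hP hQ
    have hnn : ∀ x, 0 ≤ Lfun (P x) (Q x) := fun x => Lfun_nonneg (hP.1 x) (hQ.1 x)
    have hjs : 0 ≤ jsDiv P Q := by
      rw [jsDiv_eq_sum P Q hP.1 hQ.1]
      have : 0 ≤ ∑ x, Lfun (P x) (Q x) := Finset.sum_nonneg (fun x _ => hnn x)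
      linarith
    constructor
    · intro h
      have hz : jsDiv P Q = 0 := (Real.sqrt_eq_zero hjs).mp h
      rw [jsDiv_eq_sum P Q hP.1 hQ.1] at hz
      have hsum : ∑ x, Lfun (P x) (Q x) = 0 := by linarith
      have hall := (Finset.sum_eq_zero_iff_of_nonneg (fun x _ => hnn x)).mp hsum
      funext x
      by_contra hne
      exact absurd (hall x (Finset.mem_univ x)) (Lfun_pos (hP.1 x) (hQ.1 x) hne).ne'
    · intro h
      subst h
      have : jsDiv P P = 0 := by
        rw [jsDiv_eq_sum P P hP.1 hP.1]
        rw [Finset.sum_congr rfl (fun x _ => Lfun_self (P x))]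
        simp
      rw [this, Real.sqrt_zero]
  · -- triangle
    intro P Q R hP hQ hR
    rw [jsDiv_eq_sum P R hP.1 hR.1, jsDiv_eq_sum P Q hP.1 hQ.1, jsDiv_eq_sum Q R hQ.1 hR.1]
    set u : ι → ℝ := fun x => Real.sqrt (Lfun (P x) (Q x)) with hu
    set v : ι → ℝ := fun x => Real.sqrt (Lfun (Q x) (R x)) with hv
    have hu0 : ∀ x, 0 ≤ u x := fun x => Real.sqrt_nonneg _
    have hv0 : ∀ x, 0 ≤ v x := fun x => Real.sqrt_nonneg _
    have hu2 : ∀ x, u x ^ 2 = Lfun (P x) (Q x) :=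
      fun x => Real.sq_sqrt (Lfun_nonneg (hP.1 x) (hQ.1 x))
    have hv2 : ∀ x, v x ^ 2 = Lfun (Q x) (R x) :=
      fun x => Real.sq_sqrt (Lfun_nonneg (hQ.1 x) (hR.1 x))
    -- pointwise bound on L(P,R)
    have hptw : ∀ x, Lfun (P x) (R x) ≤ (u x + v x)^2 := by
      intro x
      have h1 : Real.sqrt (Lfun (P x) (R x)) ≤ u x + v x :=
        sqrt_Lfun_triangle (hP.1 x) (hQ.1 x) (hR.1 x)
      have h2 := Real.sq_sqrt (Lfun_nonneg (hP.1 x) (hR.1 x))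
      nlinarith [Real.sqrt_nonneg (Lfun (P x) (R x))]
    -- Cauchy-Schwarz on sums
    have hCS : ∑ x, u x * v x ≤ Real.sqrt (∑ x, u x ^ 2) * Real.sqrt (∑ x, v x ^ 2) := by
      have h1 := Finset.sum_mul_sq_le_sq_mul_sq Finset.univ u v
      have h2 : 0 ≤ ∑ x, u x * v x :=
        Finset.sum_nonneg (fun x _ => mul_nonneg (hu0 x) (hv0 x))
      have h3 : Real.sqrt ((∑ x, u x ^ 2) * ∑ x, v x ^ 2)
          = Real.sqrt (∑ x, u x ^ 2) * Real.sqrt (∑ x, v x ^ 2) :=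
        Real.sqrt_mul (Finset.sum_nonneg (fun x _ => sq_nonneg _)) _
      rw [← h3]
      exact (Real.le_sqrt h2 (by positivity)).mpr h1
    have hsum : ∑ x, Lfun (P x) (R x)
        ≤ (Real.sqrt (∑ x, u x ^ 2) + Real.sqrt (∑ x, v x ^ 2))^2 := by
      have h1 : ∑ x, Lfun (P x) (R x) ≤ ∑ x, (u x + v x)^2 :=
        Finset.sum_le_sum (fun x _ => hptw x)
      have h2 : ∑ x, (u x + v x)^2 = ∑ x, u x ^ 2 + 2 * ∑ x, u x * v x + ∑ x, v x ^ 2 := by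
        rw [Finset.mul_sum, ← Finset.sum_add_distrib, ← Finset.sum_add_distrib]
        apply Finset.sum_congr rfl
        intro x _
        ring
      have h3 : Real.sqrt (∑ x, u x ^ 2) ^ 2 = ∑ x, u x ^ 2 :=
        Real.sq_sqrt (Finset.sum_nonneg (fun x _ => sq_nonneg _))
      have h4 : Real.sqrt (∑ x, v x ^ 2) ^ 2 = ∑ x, v x ^ 2 :=
        Real.sq_sqrt (Finset.sum_nonneg (fun x _ => sq_nonneg _))
      nlinarith [hCS]
    have hmain : Real.sqrt (∑ x, Lfun (P x) (R x))
        ≤ Real.sqrt (∑ x, u x ^ 2) + Real.sqrt (∑ x, v x ^ 2) := by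
      calc Real.sqrt (∑ x, Lfun (P x) (R x))
          ≤ Real.sqrt ((Real.sqrt (∑ x, u x ^ 2) + Real.sqrt (∑ x, v x ^ 2))^2) :=
            Real.sqrt_le_sqrt hsum
        _ = _ := Real.sqrt_sq (by positivity)
    have e1 : ∑ x, u x ^ 2 = ∑ x, Lfun (P x) (Q x) :=
      Finset.sum_congr rfl (fun x _ => hu2 x)
    have e2 : ∑ x, v x ^ 2 = ∑ x, Lfun (Q x) (R x) :=
      Finset.sum_congr rfl (fun x _ => hv2 x)
    rw [e1, e2] at hmain
    rw [Real.sqrt_mul (by norm_num : (0:ℝ) ≤ 1/2), Real.sqrt_mul (by norm_num : (0:ℝ) ≤ 1/2),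
      Real.sqrt_mul (by norm_num : (0:ℝ) ≤ 1/2), ← mul_add]
    exact mul_le_mul_of_nonneg_left hmain (Real.sqrt_nonneg _)
end
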